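/- Two expected-utility functionals u⁽¹⁾(π) = Σ_{x∈X} Σ_{y∈Y} π(y|x) r⁽¹⁾(x,y) and u⁽²⁾(π) = Σ_{x∈X} Σ_{y∈Y} π(y|x) r⁽²⁾(x,y) represent the same preference order over all models π (i.e., u⁽¹⁾(π) ≥ u⁽¹⁾(π') ⟺ u⁽²⁾(π) ≥ u⁽²⁾(π') for all π, π') if and only if there exist a > 0 and b : X → ℝ such that r⁽¹⁾(x,y) = a·r⁽²⁾(x,y) + b(x) for all x, y. -/
import Mathlib


/-- A model maps each prompt to a probability vector over responses. -/
def IsModel {X Y : Type*} [Fintype Y] (π : X → Y → ℝ) : Prop :=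
  (∀ x y, 0 ≤ π x y) ∧ ∀ x, ∑ y, π x y = 1

/-- Expected utility of a model under reward `r`. -/
def expUtility {X Y : Type*} [Fintype X] [Fintype Y] (r : X → Y → ℝ) (π : X → Y → ℝ) : ℝ :=
  ∑ x, ∑ y, π x y * r x y

section Aux

variable {X Y : Type*} [Fintype X] [Fintype Y]

/-- point-mass model -/
noncomputable def pm [DecidableEq Y] (f : X → Y) : X → Y → ℝ :=
  fun x y => if y = f x then 1 else 0

lemma isModel_pm [DecidableEq Y] (f : X → Y) : IsModel (pm f) := by
  constructor
  · intro x y; unfold pm; split <;> norm_num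
  · intro x; simp [pm]

lemma expUtility_pm [DecidableEq Y] (r : X → Y → ℝ) (f : X → Y) :
    expUtility r (pm f) = ∑ x, r x (f x) := by
  unfold expUtility pm
  refine Finset.sum_congr rfl fun x _ => ?_
  simp [ite_mul]

/-- mixture of two models -/
def mix (t : ℝ) (π π' : X → Y → ℝ) : X → Y → ℝ :=
  fun x y => (1 - t) * π x y + t * π' x y

lemma isModel_mix {t : ℝ} (ht0 : 0 ≤ t) (ht1 : t ≤ 1) {π π' : X → Y → ℝ}
    (h : IsModel π) (h' : IsModel π') : IsModel (mix t π π') := by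
  constructor
  · intro x y
    have h1 := h.1 x y; have h2 := h'.1 x y
    unfold mix; nlinarith
  · intro x
    unfold mix
    rw [Finset.sum_add_distrib, ← Finset.mul_sum, ← Finset.mul_sum, h.2, h'.2]
    ring

lemma expUtility_mix (r : X → Y → ℝ) (t : ℝ) (π π' : X → Y → ℝ) :
    expUtility r (mix t π π') = (1 - t) * expUtility r π + t * expUtility r π' := by
  unfold expUtility mix
  rw [Finset.mul_sum, Finset.mul_sum, ← Finset.sum_add_distrib]
  refine Finset.sum_congr rfl fun x _ => ?_
  rw [Finset.mul_sum, Finset.mul_sum, ← Finset.sum_add_distrib]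
  refine Finset.sum_congr rfl fun y _ => ?_
  ring

end Aux

/-- Two expected-utility functionals represent the same preference order over models
iff the rewards are positive-affine transforms of one another (with prompt-dependent
intercept). -/
theorem stmt_3 {X Y : Type*} [Fintype X] [Fintype Y] [Nonempty X] [Nonempty Y]
    (r₁ r₂ : X → Y → ℝ) :
    (∀ π π' : X → Y → ℝ, IsModel π → IsModel π' →
      (expUtility r₁ π ≥ expUtility r₁ π' ↔ expUtility r₂ π ≥ expUtility r₂ π')) ↔
    (∃ a > (0 : ℝ), ∃ b : X → ℝ, ∀ x y, r₁ x y = a * r₂ x y + b x) := by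
  classical
  constructor
  · intro h
    -- equality transfer
    have heq : ∀ π π', IsModel π → IsModel π' →
        expUtility r₂ π = expUtility r₂ π' → expUtility r₁ π = expUtility r₁ π' := by
      intro π π' hπ hπ' he
      have h1 := (h π π' hπ hπ').2 he.ge
      have h2 := (h π' π hπ' hπ).2 he.le
      linarith
    -- strict transfer
    have hlt : ∀ π π', IsModel π → IsModel π' →
        expUtility r₂ π' < expUtility r₂ π → expUtility r₁ π' < expUtility r₁ π := by
      intro π π' hπ hπ' hl
      by_contra hc
      push_neg at hc
      have := (h π' π hπ' hπ).1 hc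
      linarith
    set y₀ := Classical.arbitrary Y with hy₀
    have hdiff : ∀ (r : X → Y → ℝ) (x : X) (y : Y),
        expUtility r (pm (Function.update (fun _ => y₀) x y)) -
          expUtility r (pm (fun _ => y₀ : X → Y)) = r x y - r x y₀ := by
      intro r x y
      rw [expUtility_pm, expUtility_pm, ← Finset.sum_sub_distrib]
      rw [Finset.sum_eq_single x]
      · simp
      · intro x' _ hx'
        simp [Function.update_of_ne hx']
      · simp
    by_cases hex : ∃ πp πm, IsModel πp ∧ IsModel πm ∧ expUtility r₂ πm < expUtility r₂ πp
    · obtain ⟨πp, πm, hπp, hπm, hΔ⟩ := hex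
      have hΔ₂ : (0:ℝ) < expUtility r₂ πp - expUtility r₂ πm := by linarith
      have hΔ₁ : (0:ℝ) < expUtility r₁ πp - expUtility r₁ πm := by
        have := hlt πp πm hπp hπm hΔ; linarith
      -- key affine identity
      have main : ∀ π π', IsModel π → IsModel π' → 0 ≤ expUtility r₂ π - expUtility r₂ π' →
          (expUtility r₁ π - expUtility r₁ π') * (expUtility r₂ πp - expUtility r₂ πm)
            = (expUtility r₂ π - expUtility r₂ π') * (expUtility r₁ πp - expUtility r₁ πm) := by
        intro π π' hπ hπ' hD
        have hden : (0:ℝ) < (expUtility r₂ π - expUtility r₂ π') +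
            (expUtility r₂ πp - expUtility r₂ πm) := by linarith
        set t : ℝ := (expUtility r₂ π - expUtility r₂ π') /
            ((expUtility r₂ π - expUtility r₂ π') + (expUtility r₂ πp - expUtility r₂ πm))
          with htdef
        have htd : t * ((expUtility r₂ π - expUtility r₂ π') +
            (expUtility r₂ πp - expUtility r₂ πm)) = expUtility r₂ π - expUtility r₂ π' := by
          rw [htdef]; field_simp
        have ht0 : 0 ≤ t := div_nonneg hD hden.le
        have ht1 : t < 1 := by
          rw [htdef, div_lt_one hden]; linarith
        have hσ := isModel_mix ht0 ht1.le hπ hπm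
        have hσ' := isModel_mix ht0 ht1.le hπ' hπp
        have he2 : expUtility r₂ (mix t π πm) = expUtility r₂ (mix t π' πp) := by
          rw [expUtility_mix, expUtility_mix]
          linear_combination -htd
        have he1 := heq _ _ hσ hσ' he2
        rw [expUtility_mix, expUtility_mix] at he1
        have h3 : (1 - t) * ((expUtility r₁ π - expUtility r₁ π') *
              (expUtility r₂ πp - expUtility r₂ πm))
            = (1 - t) * ((expUtility r₂ π - expUtility r₂ π') *
              (expUtility r₁ πp - expUtility r₁ πm)) := by
          linear_combination (expUtility r₂ πp - expUtility r₂ πm) * he1 +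
            (expUtility r₁ πp - expUtility r₁ πm) * htd
        exact mul_left_cancel₀ (by linarith : (1:ℝ) - t ≠ 0) h3
      have key : ∀ π π', IsModel π → IsModel π' →
          (expUtility r₁ π - expUtility r₁ π') * (expUtility r₂ πp - expUtility r₂ πm)
            = (expUtility r₂ π - expUtility r₂ π') * (expUtility r₁ πp - expUtility r₁ πm) := by
        intro π π' hπ hπ'
        rcases le_total (expUtility r₂ π') (expUtility r₂ π) with hle | hle
        · exact main π π' hπ hπ' (by linarith)
        · have := main π' π hπ' hπ (by linarith)
          linear_combination -this
      refine ⟨(expUtility r₁ πp - expUtility r₁ πm) / (expUtility r₂ πp - expUtility r₂ πm),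
        div_pos hΔ₁ hΔ₂,
        fun x => r₁ x y₀ - ((expUtility r₁ πp - expUtility r₁ πm) /
          (expUtility r₂ πp - expUtility r₂ πm)) * r₂ x y₀, ?_⟩
      intro x y
      have hk := key (pm (Function.update (fun _ => y₀) x y)) (pm (fun _ => y₀))
        (isModel_pm _) (isModel_pm _)
      rw [hdiff r₁ x y, hdiff r₂ x y] at hk
      field_simp
      linear_combination hk
    · push_neg at hex
      have hall : ∀ π π', IsModel π → IsModel π' → expUtility r₁ π = expUtility r₁ π' := by
        intro π π' hπ hπ'
        have e2 : expUtility r₂ π = expUtility r₂ π' :=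
          le_antisymm (hex π π' hπ hπ') (hex π' π hπ' hπ)
        exact heq π π' hπ hπ' e2
      have hall2 : ∀ π π', IsModel π → IsModel π' → expUtility r₂ π = expUtility r₂ π' := by
        intro π π' hπ hπ'
        exact le_antisymm (hex π π' hπ hπ') (hex π' π hπ' hπ)
      refine ⟨1, one_pos, fun x => r₁ x y₀ - r₂ x y₀, ?_⟩
      intro x y
      have h1 : r₁ x y - r₁ x y₀ = 0 := by
        rw [← hdiff r₁ x y]
        have := hall (pm (Function.update (fun _ => y₀) x y)) (pm (fun _ => y₀))
          (isModel_pm _) (isModel_pm _)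
        linarith
      have h2 : r₂ x y - r₂ x y₀ = 0 := by
        rw [← hdiff r₂ x y]
        have := hall2 (pm (Function.update (fun _ => y₀) x y)) (pm (fun _ => y₀))
          (isModel_pm _) (isModel_pm _)
        linarith
      show r₁ x y = 1 * r₂ x y + (r₁ x y₀ - r₂ x y₀)
      linarith
  · rintro ⟨a, ha, b, hb⟩ π π' hπ hπ'
    have hu : ∀ σ : X → Y → ℝ, IsModel σ →
        expUtility r₁ σ = a * expUtility r₂ σ + ∑ x, b x := by
      intro σ hσ
      unfold expUtility
      rw [Finset.mul_sum, ← Finset.sum_add_distrib]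
      refine Finset.sum_congr rfl fun x _ => ?_
      rw [Finset.mul_sum]
      have hrow : ∑ y, σ x y * r₁ x y = ∑ y, (a * (σ x y * r₂ x y) + σ x y * b x) := by
        refine Finset.sum_congr rfl fun y _ => ?_
        rw [hb]; ring
      rw [hrow, Finset.sum_add_distrib, ← Finset.sum_mul, hσ.2 x, one_mul]
    rw [hu π hπ, hu π' hπ']
    constructor <;> intro h' <;> nlinarith
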